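/- Let G = (V,E) be a d-regular finite graph, and let t₁ be the smallest eigenvalue of its normalized adjacency matrix (1/d)A. Then 1 + t₁ ≥ β_out²/(16d), where β_out is the outer vertex bipartiteness constant of G. -/

import Mathlib

attribute [local instance] Classical.propDecidable

/-- The outer vertex boundary of a finite set `U`: vertices outside `U` with a neighbor in `U`. -/
noncomputable def outBd {V : Type*} [Fintype V] (Adj : V → V → Prop) (U : Finset V) : Finset V :=
  Finset.univ.filter fun y => y ∉ U ∧ ∃ x ∈ U, Adj x y

/-- `I(L)` is the number of vertices of `L` having a neighbor in `L`. -/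
noncomputable def II {V : Type*} (Adj : V → V → Prop) (L : Finset V) : ℕ :=
  (L.filter fun x => ∃ y ∈ L, Adj x y).card

/-- The outer vertex bipartiteness constant `β_out`. -/
noncomputable def betaOut {V : Type*} [Fintype V] (Adj : V → V → Prop) : ℝ :=
  sInf {r : ℝ | ∃ L R : Finset V, Disjoint L R ∧ (L ∪ R).Nonempty ∧
    r = ((II Adj L : ℝ) + (II Adj R : ℝ) + ((outBd Adj (L ∪ R)).card : ℝ)) /
      ((L ∪ R).card : ℝ)}

open MeasureTheory Finset

private lemma betaOut_bddBelow {V : Type*} [Fintype V] (Adj : V → V → Prop) :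
    ∀ r ∈ {r : ℝ | ∃ L R : Finset V, Disjoint L R ∧ (L ∪ R).Nonempty ∧
      r = ((II Adj L : ℝ) + (II Adj R : ℝ) + ((outBd Adj (L ∪ R)).card : ℝ)) /
        ((L ∪ R).card : ℝ)}, (0:ℝ) ≤ r := by
  rintro r ⟨L, R, -, -, rfl⟩
  positivity

private lemma betaOut_le {V : Type*} [Fintype V] (Adj : V → V → Prop) (L R : Finset V)
    (h1 : Disjoint L R) (h2 : (L ∪ R).Nonempty) :
    betaOut Adj ≤ ((II Adj L : ℝ) + (II Adj R : ℝ) + ((outBd Adj (L ∪ R)).card : ℝ)) /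
      ((L ∪ R).card : ℝ) := by
  apply csInf_le ⟨0, betaOut_bddBelow Adj⟩
  exact ⟨L, R, h1, h2, rfl⟩

private lemma betaOut_nonneg {V : Type*} [Fintype V] (Adj : V → V → Prop) :
    0 ≤ betaOut Adj :=
  Real.sInf_nonneg (betaOut_bddBelow Adj)

private lemma betaOut_le_one {V : Type*} [Fintype V] [Nonempty V] (Adj : V → V → Prop) :
    betaOut Adj ≤ 1 := by
  classical
  have h := betaOut_le Adj Finset.univ ∅ (Finset.disjoint_empty_right _)
    (by simp [Finset.univ_nonempty])
  have hout : outBd Adj (Finset.univ ∪ ∅ : Finset V) = ∅ := by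
    ext y; simp [outBd]
  have hII0 : II Adj (∅ : Finset V) = 0 := by simp [II]
  have hcard : (0:ℝ) < ((Finset.univ : Finset V).card : ℝ) := by
    have := Finset.univ_nonempty (α := V)
    exact_mod_cast Finset.card_pos.mpr this
  calc betaOut Adj ≤ ((II Adj (Finset.univ : Finset V) : ℝ) + (II Adj (∅ : Finset V) : ℝ)
        + ((outBd Adj ((Finset.univ : Finset V) ∪ ∅)).card : ℝ)) /
        (((Finset.univ : Finset V) ∪ ∅).card : ℝ) := h
    _ ≤ 1 := by
      rw [hout, hII0, Finset.union_empty]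
      rw [div_le_one hcard]
      have : (II Adj (Finset.univ : Finset V) : ℝ) ≤ ((Finset.univ : Finset V).card : ℝ) := by
        exact_mod_cast Finset.card_filter_le _ _
      simp only [Finset.card_empty, Nat.cast_zero]
      push_cast
      linarith

private lemma abs_sq_le_aux (A b : ℝ) : A^2 ≤ b^2 + (A+b)^2 + 2 * |A+b| * |b| := by
  have h1 : A^2 - b^2 ≤ |A+b| * |A-b| := by
    rw [← abs_mul]
    nlinarith [le_abs_self ((A+b)*(A-b))]
  have h2 : |A-b| ≤ |A+b| + 2 * |b| := by
    have he : A - b = (A + b) + (-2*b) := by ring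
    rw [he]
    calc |(A+b) + (-2*b)| ≤ |A+b| + |(-2*b)| := abs_add_le _ _
      _ = |A+b| + 2 * |b| := by rw [abs_mul]; norm_num
  have h3 : |A+b| * |A-b| ≤ |A+b| * (|A+b| + 2 * |b|) :=
    mul_le_mul_of_nonneg_left h2 (abs_nonneg _)
  have h4 : |A+b| * |A+b| = (A+b)^2 := by rw [← abs_mul, abs_mul_self]; ring
  nlinarith


private lemma sum_le_card {V : Type*} [Fintype V] (S : Finset V) (h : V → ℝ)
    (h1 : ∀ x, h x ≤ 1) (hz : ∀ x, x ∉ S → h x = 0) :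
    ∑ x, h x ≤ (S.card : ℝ) := by
  rw [← Finset.sum_subset (Finset.subset_univ S) (fun x _ hx => hz x hx)]
  calc ∑ x ∈ S, h x ≤ ∑ x ∈ S, 1 := Finset.sum_le_sum (fun x _ => h1 x)
    _ = (S.card : ℝ) := by simp

private lemma card_filter_le_sum {V : Type*} [Fintype V] (p : V → Prop) [DecidablePred p]
    (h : V → ℝ) (hnn : ∀ x, 0 ≤ h x) (hb : ∀ y, p y → 1 ≤ h y) :
    ((Finset.univ.filter p).card : ℝ) ≤ ∑ x, h x := by
  calc ((Finset.univ.filter p).card : ℝ) = ∑ x ∈ Finset.univ.filter p, (1:ℝ) := by simp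
    _ ≤ ∑ x ∈ Finset.univ.filter p, h x :=
        Finset.sum_le_sum fun x hx => hb x (Finset.mem_filter.mp hx).2
    _ ≤ ∑ x, h x := Finset.sum_le_sum_of_subset_of_nonneg
        (Finset.filter_subset _ _) (fun x _ _ => hnn x)

private lemma two_card_filter_le_sum {V : Type*} [Fintype V] (L R : Finset V) (p q : V → Prop)
    [DecidablePred p] [DecidablePred q] (hdisj : Disjoint L R) (h : V → ℝ)
    (hnn : ∀ x, 0 ≤ h x)
    (hbL : ∀ x ∈ L, p x → 1 ≤ h x) (hbR : ∀ x ∈ R, q x → 1 ≤ h x) :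
    ((L.filter p).card : ℝ) + ((R.filter q).card : ℝ) ≤ ∑ x, h x := by
  have hd2 : Disjoint (L.filter p) (R.filter q) := Finset.disjoint_filter_filter hdisj
  have e : ((L.filter p).card : ℝ) + ((R.filter q).card : ℝ)
      = ((L.filter p ∪ R.filter q).card : ℝ) := by
    rw [Finset.card_union_of_disjoint hd2]; push_cast; ring
  rw [e]
  calc ((L.filter p ∪ R.filter q).card : ℝ) = ∑ x ∈ L.filter p ∪ R.filter q, (1:ℝ) := by simp
    _ ≤ ∑ x ∈ L.filter p ∪ R.filter q, h x := by
        apply Finset.sum_le_sum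
        intro x hx
        rcases Finset.mem_union.mp hx with hx' | hx'
        · exact hbL x (Finset.mem_filter.mp hx').1 (Finset.mem_filter.mp hx').2
        · exact hbR x (Finset.mem_filter.mp hx').1 (Finset.mem_filter.mp hx').2
    _ ≤ ∑ x, h x := Finset.sum_le_sum_of_subset_of_nonneg
        (Finset.subset_univ _) (fun x _ _ => hnn x)

set_option maxHeartbeats 2000000


/-- The key spectral estimate: for any eigenpair `(r, f)` of the normalized adjacency matrix
of a `d`-regular graph (`d ≥ 1`), `β_out² ≤ 16 d (1+r)`. -/
private lemma key_estimate {V : Type*} [Fintype V] [Nonempty V] (Adj : V → V → Prop)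
    (hsymm : ∀ x y : V, Adj x y → Adj y x) (d : ℕ) (hd : 1 ≤ d)
    (hreg : ∀ x : V, (Finset.univ.filter fun y => Adj x y).card = d)
    (r : ℝ) (f : V → ℝ) (hf : f ≠ 0)
    (heig0 : ∀ x, ∑ y, (if Adj x y then (1:ℝ) else 0) * f y = (d:ℝ) * r * f x) :
    betaOut Adj ^ 2 ≤ 16 * (d:ℝ) * (1 + r) := by
  classical
  set a : V → V → ℝ := fun x y => if Adj x y then (1:ℝ) else 0 with ha
  have heig : ∀ x, ∑ y, a x y * f y = (d:ℝ) * r * f x := by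
    intro x; simp only [ha]; exact heig0 x
  have ha01 : ∀ x y, 0 ≤ a x y := by intro x y; simp only [ha]; positivity
  have ha_one : ∀ x y, Adj x y → a x y = 1 := by intro x y h; simp [ha, h]
  have hasymm : ∀ x y, a x y = a y x := by
    intro x y
    simp only [ha]
    by_cases h : Adj x y
    · rw [if_pos h, if_pos (hsymm x y h)]
    · rw [if_neg h, if_neg (fun h' => h (hsymm y x h'))]
  have hrow : ∀ x, ∑ y, a x y = (d:ℝ) := by
    intro x
    simp only [ha]
    rw [Finset.sum_boole, hreg]
  set P : ℝ := ∑ x, f x ^ 2 with hPdef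
  set Q : ℝ := ∑ x, ∑ y, a x y * (f x + f y)^2 with hQdef
  have hP : 0 < P := by
    obtain ⟨x1, hx1⟩ := Function.ne_iff.mp hf
    exact Finset.sum_pos' (fun i _ => sq_nonneg _)
      ⟨x1, Finset.mem_univ x1, lt_of_le_of_ne (sq_nonneg _) (Ne.symm (pow_ne_zero 2 hx1))⟩
  have hQ : Q = 2*(d:ℝ)*(1+r)*P := by
    have e1 : ∀ x, ∑ y, a x y * (f x + f y)^2
        = (d:ℝ) * f x^2 + 2*((d:ℝ)*r*f x*f x) + ∑ y, a x y * f y^2 := by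
      intro x
      have hexp : ∀ y, a x y * (f x + f y)^2
          = a x y * f x^2 + 2*(a x y * f y * f x) + a x y * f y^2 := by intro y; ring
      rw [Finset.sum_congr rfl (fun y _ => hexp y), Finset.sum_add_distrib,
        Finset.sum_add_distrib, ← Finset.sum_mul, hrow, ← Finset.mul_sum, ← Finset.sum_mul, heig]
    rw [hQdef, Finset.sum_congr rfl (fun x _ => e1 x), Finset.sum_add_distrib,
      Finset.sum_add_distrib]
    have e2 : ∑ x, ∑ y, a x y * f y^2 = (d:ℝ) * P := by
      rw [Finset.sum_comm]
      have e2' : ∀ y, ∑ x, a x y * f y^2 = (d:ℝ) * f y^2 := by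
        intro y
        rw [Finset.sum_congr rfl (fun x _ => by rw [hasymm x y]), ← Finset.sum_mul, hrow]
      rw [Finset.sum_congr rfl (fun y _ => e2' y), ← Finset.mul_sum, hPdef]
    have e3 : ∑ x, 2*((d:ℝ)*r*f x*f x) = 2*((d:ℝ)*r*P) := by
      rw [hPdef, Finset.mul_sum, ← Finset.mul_sum, Finset.mul_sum, Finset.mul_sum]
      exact Finset.sum_congr rfl fun x _ => by ring
    rw [e2, e3, ← Finset.mul_sum, hPdef]
    ring
  have hQnn : 0 ≤ Q := by
    rw [hQdef]
    apply Finset.sum_nonneg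
    intro x _
    exact Finset.sum_nonneg fun y _ => mul_nonneg (ha01 x y) (sq_nonneg _)
  have hdpos : (0:ℝ) < (d:ℝ) := by exact_mod_cast hd
  have hε : 0 ≤ 1 + r := by nlinarith [mul_pos hdpos hP]
  -- the maximum of f²
  obtain ⟨x0, -, hx0⟩ := Finset.exists_max_image Finset.univ (fun x => f x ^ 2)
    Finset.univ_nonempty
  set B : ℝ := f x0 ^ 2 with hBdef
  have hB : ∀ x, f x ^ 2 ≤ B := fun x => hx0 x (Finset.mem_univ x)
  have hBpos : 0 < B := by
    obtain ⟨x1, hx1⟩ := Function.ne_iff.mp hf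
    exact lt_of_lt_of_le (lt_of_le_of_ne (sq_nonneg _) (Ne.symm (pow_ne_zero 2 hx1))) (hB x1)
  -- maximal neighbor
  have hN : ∀ y : V, ∃ x, Adj y x ∧ ∀ z, Adj y z → f z^2 ≤ f x^2 := by
    intro y
    have hne : (Finset.univ.filter fun x => Adj y x).Nonempty := by
      apply Finset.card_pos.mp
      rw [hreg]; omega
    obtain ⟨x, hx, hmax⟩ := Finset.exists_max_image _ (fun x => f x^2) hne
    exact ⟨x, (Finset.mem_filter.mp hx).2,
      fun z hz => hmax z (Finset.mem_filter.mpr ⟨Finset.mem_univ _, hz⟩)⟩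
  choose xm hxm1 hxm2 using hN
  set g : V → ℝ := fun y => f y^2 + (f (xm y) + f y)^2 + 2 * |f (xm y) + f y| * |f y|
    with hgdef
  have hg_ge : ∀ y, f y^2 ≤ g y := by
    intro y
    simp only [hgdef]
    have h1 : 0 ≤ (f (xm y) + f y)^2 := sq_nonneg _
    have h2 : 0 ≤ 2 * |f (xm y) + f y| * |f y| := by positivity
    linarith
  have hg_max : ∀ y, f (xm y)^2 ≤ g y := by
    intro y
    simpa [hgdef] using abs_sq_le_aux (f (xm y)) (f y)
  -- indicator functions
  set F : ℝ → ℝ → ℝ → ℝ := fun p q => (Set.Ioc p q).indicator (fun _ => (1:ℝ)) with hFdef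
  have hF01 : ∀ p q t, 0 ≤ F p q t := by
    intro p q t
    exact Set.indicator_nonneg (fun _ _ => zero_le_one) t
  have hFone : ∀ p q t, p < t → t ≤ q → F p q t = 1 := by
    intro p q t h1 h2
    simp [hFdef, Set.indicator_apply, Set.mem_Ioc, h1, h2]
  have hFite : ∀ p q t, F p q t = if p < t ∧ t ≤ q then 1 else 0 := by
    intro p q t
    simp [hFdef, Set.indicator_apply, Set.mem_Ioc]
  have hFint : ∀ p q, IntegrableOn (F p q) (Set.Ioc (0:ℝ) B) := by
    intro p q
    exact (integrableOn_const measure_Ioc_lt_top.ne).indicator measurableSet_Ioc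
  have hFvol : ∀ p q, ∫ t in Set.Ioc (0:ℝ) B, F p q t
      = (volume (Set.Ioc (0:ℝ) B ∩ Set.Ioc p q)).toReal := by
    intro p q
    rw [hFdef]
    rw [MeasureTheory.setIntegral_indicator measurableSet_Ioc]
    rw [MeasureTheory.setIntegral_const]
    simp
    rfl
  have hFval : ∀ q, 0 ≤ q → q ≤ B → ∫ t in Set.Ioc (0:ℝ) B, F 0 q t = q := by
    intro q h0 hq
    rw [hFvol, Set.Ioc_inter_Ioc, sup_idem, min_eq_right hq, Real.volume_Ioc,
      ENNReal.toReal_ofReal (by linarith)]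
    ring
  have hFle : ∀ p q, p ≤ q → ∫ t in Set.Ioc (0:ℝ) B, F p q t ≤ q - p := by
    intro p q hpq
    rw [hFvol]
    have h1 : volume (Set.Ioc (0:ℝ) B ∩ Set.Ioc p q) ≤ ENNReal.ofReal (q - p) := by
      calc volume (Set.Ioc (0:ℝ) B ∩ Set.Ioc p q) ≤ volume (Set.Ioc p q) :=
            measure_mono Set.inter_subset_right
        _ = ENNReal.ofReal (q - p) := Real.volume_Ioc
    calc (volume (Set.Ioc (0:ℝ) B ∩ Set.Ioc p q)).toReal
        ≤ (ENNReal.ofReal (q - p)).toReal := ENNReal.toReal_mono ENNReal.ofReal_ne_top h1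
      _ = q - p := ENNReal.toReal_ofReal (by linarith)
  -- min-type thresholds
  set mm : V → V → ℝ := fun x y => if 0 < f x * f y then min (f x^2) (f y^2) else 0 with hmm
  have hmm_nn : ∀ x y, 0 ≤ mm x y := by
    intro x y
    simp only [hmm]
    split
    · exact le_min (sq_nonneg _) (sq_nonneg _)
    · exact le_refl 0
  have hmm_le : ∀ x y, mm x y ≤ (f x + f y)^2 := by
    intro x y
    simp only [hmm]
    split
    · rename_i h
      nlinarith [min_le_left (f x^2) (f y^2), sq_nonneg (f y)]
    · positivity
  -- pointwise inequality
  have hpt : ∀ t ∈ Set.Ioc (0:ℝ) B,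
      betaOut Adj * ∑ x, F 0 (f x^2) t
        ≤ (∑ x, ∑ y, a x y * F 0 (mm x y) t) + ∑ y, F (f y^2) (g y) t := by
    rintro t ⟨ht0, htB⟩
    set Lt : Finset V := Finset.univ.filter (fun x => t ≤ f x^2 ∧ f x < 0) with hLt
    set Rt : Finset V := Finset.univ.filter (fun x => t ≤ f x^2 ∧ 0 < f x) with hRt
    have hmemL : ∀ x, x ∈ Lt ↔ (t ≤ f x^2 ∧ f x < 0) := by
      intro x; simp [hLt, Finset.mem_filter]
    have hmemR : ∀ x, x ∈ Rt ↔ (t ≤ f x^2 ∧ 0 < f x) := by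
      intro x; simp [hRt, Finset.mem_filter]
    have hunion : Lt ∪ Rt = Finset.univ.filter (fun x => t ≤ f x^2) := by
      ext z
      simp only [Finset.mem_union, hmemL z, hmemR z, Finset.mem_filter, Finset.mem_univ, true_and]
      constructor
      · rintro (⟨h, -⟩ | ⟨h, -⟩) <;> exact h
      · intro h
        rcases lt_trichotomy (f z) 0 with hz | hz | hz
        · exact Or.inl ⟨h, hz⟩
        · exfalso; rw [hz] at h; nlinarith
        · exact Or.inr ⟨h, hz⟩
    have hdisj : Disjoint Lt Rt := by
      rw [Finset.disjoint_left]
      intro x hx hx'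
      rw [hmemL] at hx
      rw [hmemR] at hx'
      linarith [hx.2, hx'.2]
    have hx0mem : x0 ∈ Lt ∪ Rt := by
      rw [hunion]; exact Finset.mem_filter.mpr ⟨Finset.mem_univ _, htB⟩
    have hne : (Lt ∪ Rt).Nonempty := ⟨x0, hx0mem⟩
    have hcardpos : (0:ℝ) < ((Lt ∪ Rt).card : ℝ) := by
      exact_mod_cast Finset.card_pos.mpr hne
    have hβ := betaOut_le Adj Lt Rt hdisj hne
    have hnum : betaOut Adj * ((Lt ∪ Rt).card : ℝ)
        ≤ (II Adj Lt : ℝ) + (II Adj Rt : ℝ) + ((outBd Adj (Lt ∪ Rt)).card : ℝ) :=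
      (le_div_iff₀ hcardpos).mp hβ
    have hF1 : ∀ p q u, F p q u ≤ 1 := by
      intro p q u
      simp only [hFdef, Set.indicator_apply]
      split <;> norm_num
    have hcardS : ∑ x, F 0 (f x^2) t ≤ ((Lt ∪ Rt).card : ℝ) := by
      apply sum_le_card
      · exact fun x => hF1 _ _ _
      · intro x hx
        rw [hunion] at hx
        have hnle : ¬ t ≤ f x^2 := fun hc =>
          hx (Finset.mem_filter.mpr ⟨Finset.mem_univ _, hc⟩)
        apply Set.indicator_of_notMem
        rw [Set.mem_Ioc]
        tauto
    have hhnn : ∀ x, (0:ℝ) ≤ ∑ y, a x y * F 0 (mm x y) t :=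
      fun x => Finset.sum_nonneg fun y _ => mul_nonneg (ha01 x y) (hF01 _ _ _)
    have hII : (II Adj Lt : ℝ) + (II Adj Rt : ℝ) ≤ ∑ x, ∑ y, a x y * F 0 (mm x y) t := by
      apply two_card_filter_le_sum Lt Rt _ _ hdisj _ hhnn
      · rintro x hxL ⟨y, hyL, hadj⟩
        have hxL' := (hmemL x).mp hxL
        have hyL' := (hmemL y).mp hyL
        have h1 : a x y * F 0 (mm x y) t = 1 := by
          rw [ha_one x y hadj, one_mul]
          apply hFone _ _ _ ht0
          simp only [hmm]
          rw [if_pos (mul_pos_of_neg_of_neg hxL'.2 hyL'.2)]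
          exact le_min hxL'.1 hyL'.1
        exact h1 ▸ Finset.single_le_sum
          (fun y _ => mul_nonneg (ha01 x y) (hF01 _ _ _)) (Finset.mem_univ y)
      · rintro x hxR ⟨y, hyR, hadj⟩
        have hxR' := (hmemR x).mp hxR
        have hyR' := (hmemR y).mp hyR
        have h1 : a x y * F 0 (mm x y) t = 1 := by
          rw [ha_one x y hadj, one_mul]
          apply hFone _ _ _ ht0
          simp only [hmm]
          rw [if_pos (mul_pos hxR'.2 hyR'.2)]
          exact le_min hxR'.1 hyR'.1
        exact h1 ▸ Finset.single_le_sum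
          (fun y _ => mul_nonneg (ha01 x y) (hF01 _ _ _)) (Finset.mem_univ y)
    have hbd : ((outBd Adj (Lt ∪ Rt)).card : ℝ) ≤ ∑ y, F (f y^2) (g y) t := by
      apply card_filter_le_sum _ _ (fun y => hF01 _ _ _)
      rintro y ⟨hynot, x, hxS, hadj⟩
      have h1 : f y^2 < t := by
        rw [hunion] at hynot
        by_contra hcon
        push_neg at hcon
        exact hynot (Finset.mem_filter.mpr ⟨Finset.mem_univ _, hcon⟩)
      have h2 : t ≤ f x^2 := by
        rw [hunion] at hxS
        exact (Finset.mem_filter.mp hxS).2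
      have h3 : f x^2 ≤ f (xm y)^2 := hxm2 y x (hsymm x y hadj)
      rw [hFone _ _ _ h1 (h2.trans (h3.trans (hg_max y)))]
    calc betaOut Adj * ∑ x, F 0 (f x^2) t
        ≤ betaOut Adj * ((Lt ∪ Rt).card : ℝ) :=
          mul_le_mul_of_nonneg_left hcardS (betaOut_nonneg Adj)
      _ ≤ (II Adj Lt : ℝ) + (II Adj Rt : ℝ) + ((outBd Adj (Lt ∪ Rt)).card : ℝ) := hnum
      _ ≤ (∑ x, ∑ y, a x y * F 0 (mm x y) t) + ∑ y, F (f y^2) (g y) t := by linarith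
  -- integrate the pointwise inequality
  have hrhs1_int : IntegrableOn (fun t => ∑ x, ∑ y, a x y * F 0 (mm x y) t)
      (Set.Ioc (0:ℝ) B) :=
    integrable_finset_sum _ (fun x _ => integrable_finset_sum _
      (fun y _ => (hFint 0 (mm x y)).const_mul (a x y)))
  have hrhs2_int : IntegrableOn (fun t => ∑ y, F (f y^2) (g y) t) (Set.Ioc (0:ℝ) B) :=
    integrable_finset_sum _ (fun y _ => hFint _ _)
  have hlhs_int : IntegrableOn (fun t => betaOut Adj * ∑ x, F 0 (f x^2) t)
      (Set.Ioc (0:ℝ) B) :=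
    (integrable_finset_sum _ (fun x _ => hFint 0 (f x^2))).const_mul _
  have hmono := MeasureTheory.setIntegral_mono_on hlhs_int (hrhs1_int.add hrhs2_int)
    measurableSet_Ioc hpt
  have hlhs_val : ∫ t in Set.Ioc (0:ℝ) B, betaOut Adj * ∑ x, F 0 (f x^2) t
      = betaOut Adj * P := by
    rw [MeasureTheory.integral_const_mul,
      MeasureTheory.integral_finset_sum _ (fun x _ => hFint 0 (f x^2))]
    congr 1
    rw [hPdef]
    exact Finset.sum_congr rfl fun x _ => hFval (f x^2) (sq_nonneg _) (hB x)
  have hQ' : ∑ y, (f (xm y) + f y)^2 ≤ Q := by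
    rw [hQdef, Finset.sum_comm]
    apply Finset.sum_le_sum
    intro y _
    have he : a (xm y) y * (f (xm y) + f y)^2 = (f (xm y) + f y)^2 := by
      rw [ha_one _ _ (hsymm y (xm y) (hxm1 y)), one_mul]
    calc (f (xm y) + f y)^2 = a (xm y) y * (f (xm y) + f y)^2 := he.symm
      _ ≤ ∑ x, a x y * (f x + f y)^2 := Finset.single_le_sum
          (f := fun x => a x y * (f x + f y)^2)
          (fun x _ => mul_nonneg (ha01 x y) (sq_nonneg _)) (Finset.mem_univ (xm y))
  have hCS : ∑ y, |f (xm y) + f y| * |f y| ≤ Real.sqrt (Q * P) := by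
    have h1 := Finset.sum_mul_sq_le_sq_mul_sq Finset.univ
      (fun y => |f (xm y) + f y|) (fun y => |f y|)
    have h2 : ∑ y, |f (xm y) + f y|^2 = ∑ y, (f (xm y) + f y)^2 :=
      Finset.sum_congr rfl fun y _ => sq_abs _
    have h3 : ∑ y, |f y|^2 = P := by
      rw [hPdef]; exact Finset.sum_congr rfl fun y _ => sq_abs _
    have h4 : (∑ y, |f (xm y) + f y| * |f y|)^2 ≤ Q * P := by
      calc (∑ y, |f (xm y) + f y| * |f y|)^2
          ≤ (∑ y, |f (xm y) + f y|^2) * ∑ y, |f y|^2 := h1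
        _ = (∑ y, (f (xm y) + f y)^2) * P := by rw [h2, h3]
        _ ≤ Q * P := mul_le_mul_of_nonneg_right hQ' hP.le
    have h5 : 0 ≤ ∑ y, |f (xm y) + f y| * |f y| :=
      Finset.sum_nonneg fun y _ => mul_nonneg (abs_nonneg _) (abs_nonneg _)
    exact (Real.le_sqrt h5 (mul_nonneg hQnn hP.le)).mpr h4
  have hA : ∫ t in Set.Ioc (0:ℝ) B, ∑ x, ∑ y, a x y * F 0 (mm x y) t ≤ Q := by
    rw [MeasureTheory.integral_finset_sum _ (fun x _ => integrable_finset_sum _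
      (fun y _ => (hFint 0 (mm x y)).const_mul (a x y)))]
    rw [hQdef]
    apply Finset.sum_le_sum
    intro x _
    rw [MeasureTheory.integral_finset_sum _ (fun y _ => (hFint 0 (mm x y)).const_mul (a x y))]
    apply Finset.sum_le_sum
    intro y _
    rw [MeasureTheory.integral_const_mul]
    have hle : ∫ t in Set.Ioc (0:ℝ) B, F 0 (mm x y) t ≤ mm x y := by
      have := hFle 0 (mm x y) (hmm_nn x y)
      linarith
    calc a x y * ∫ t in Set.Ioc (0:ℝ) B, F 0 (mm x y) t
        ≤ a x y * mm x y := mul_le_mul_of_nonneg_left hle (ha01 x y)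
      _ ≤ a x y * (f x + f y)^2 := mul_le_mul_of_nonneg_left (hmm_le x y) (ha01 x y)
  have hB2 : ∫ t in Set.Ioc (0:ℝ) B, ∑ y, F (f y^2) (g y) t ≤ Q + 2 * Real.sqrt (Q * P) := by
    rw [MeasureTheory.integral_finset_sum _ (fun y _ => hFint _ _)]
    calc ∑ y, ∫ t in Set.Ioc (0:ℝ) B, F (f y^2) (g y) t
        ≤ ∑ y, (g y - f y^2) := Finset.sum_le_sum fun y _ => hFle _ _ (hg_ge y)
      _ = (∑ y, (f (xm y) + f y)^2) + 2 * ∑ y, |f (xm y) + f y| * |f y| := by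
          rw [Finset.mul_sum, ← Finset.sum_add_distrib]
          refine Finset.sum_congr rfl fun y _ => ?_
          simp only [hgdef]
          ring
      _ ≤ Q + 2 * Real.sqrt (Q * P) := by linarith
  have hrhs_val : ∫ t in Set.Ioc (0:ℝ) B,
      ((∑ x, ∑ y, a x y * F 0 (mm x y) t) + ∑ y, F (f y^2) (g y) t)
      ≤ Q + (Q + 2 * Real.sqrt (Q * P)) := by
    rw [MeasureTheory.integral_add hrhs1_int hrhs2_int]
    linarith
  have hmain : betaOut Adj * P ≤ 2*Q + 2*Real.sqrt (Q*P) := by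
    rw [hlhs_val] at hmono
    simp only [Pi.add_apply] at hmono
    linarith
  -- final arithmetic
  set s := Real.sqrt (2*(d:ℝ)*(1+r)) with hs
  have hsnn : 0 ≤ s := Real.sqrt_nonneg _
  have hs2 : s^2 = 2*(d:ℝ)*(1+r) := Real.sq_sqrt (by positivity)
  have hQs : Q = s^2 * P := by rw [hs2, hQ]
  have hsqrtQP : Real.sqrt (Q*P) = s * P := by
    rw [hQs]
    rw [show s^2 * P * P = (s*P)^2 from by ring, Real.sqrt_sq (by positivity)]
  have hβb : betaOut Adj ≤ 2*s^2 + 2*s := by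
    rw [hsqrtQP, hQs] at hmain
    exact (mul_le_mul_iff_left₀ hP).mp (by nlinarith)
  have h8 : 16*(d:ℝ)*(1+r) = 8*s^2 := by rw [hs2]; ring
  rw [h8]
  have hb0 := betaOut_nonneg Adj
  by_cases hcase : 1 ≤ 8*s^2
  · have hb1 := betaOut_le_one Adj
    nlinarith
  · push_neg at hcase
    have hs38 : s ≤ 3/8 := by nlinarith [sq_nonneg (s - 3/8)]
    have hkey2 : s^2 + 2*s - 1 ≤ 0 := by nlinarith [mul_le_mul_of_nonneg_left hs38 hsnn]
    have hkey3 : 4*s^2*(s^2 + 2*s - 1) ≤ 0 :=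
      mul_nonpos_of_nonneg_of_nonpos (by positivity) hkey2
    nlinarith [mul_self_le_mul_self hb0 hβb]

/-- For a `d`-regular finite graph with smallest normalized adjacency eigenvalue `t₁`,
`1 + t₁ ≥ β_out²/(16d)`. -/
theorem one_add_t1_ge_betaOut_sq_bound {V : Type*} [Fintype V] [Nonempty V]
    (Adj : V → V → Prop)
    (hsymm : ∀ x y : V, Adj x y → Adj y x) (d : ℕ)
    (hreg : ∀ x : V, (Finset.univ.filter fun y => Adj x y).card = d)
    (t1 : ℝ)
    (ht1 : t1 = sInf {r : ℝ | ∃ f : V → ℝ, f ≠ 0 ∧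
      ((d : ℝ)⁻¹ • Matrix.of fun x y : V => if Adj x y then (1 : ℝ) else 0).mulVec f
        = r • f}) :
    1 + t1 ≥ betaOut Adj ^ 2 / (16 * (d : ℝ)) := by
  classical
  set M : Matrix V V ℝ := (d : ℝ)⁻¹ • Matrix.of fun x y : V => if Adj x y then (1 : ℝ) else 0
    with hM
  have hherm : M.IsHermitian := by
    rw [Matrix.IsHermitian, hM]
    ext x y
    simp only [Matrix.conjTranspose_apply, Matrix.smul_apply, Matrix.of_apply, smul_eq_mul,
      star_trivial]
    congr 1
    exact if_congr ⟨hsymm y x, hsymm x y⟩ rfl rfl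
  have hSne : {r : ℝ | ∃ f : V → ℝ, f ≠ 0 ∧ M.mulVec f = r • f}.Nonempty := by
    obtain ⟨i⟩ := (inferInstance : Nonempty V)
    refine ⟨hherm.eigenvalues i, (WithLp.equiv 2 _) (hherm.eigenvectorBasis i), ?_, ?_⟩
    · intro hc
      exact hherm.eigenvectorBasis.orthonormal.ne_zero i
        ((WithLp.equiv 2 _).injective (by simpa using hc))
    · exact hherm.mulVec_eigenvectorBasis i
  rcases Nat.eq_zero_or_pos d with hd0 | hd
  · subst hd0
    have hall : ∀ b ∈ {r : ℝ | ∃ f : V → ℝ, f ≠ 0 ∧ M.mulVec f = r • f}, b = 0 := by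
      rintro b ⟨f, hf, hb⟩
      rw [hM] at hb
      simp only [Nat.cast_zero, inv_zero, zero_smul, Matrix.zero_mulVec] at hb
      obtain ⟨x, hx⟩ := Function.ne_iff.mp hf
      have hx2 := congrFun hb x
      simp only [Pi.zero_apply, Pi.smul_apply, smul_eq_mul] at hx2
      rcases mul_eq_zero.mp hx2.symm with h | h
      · exact h
      · exact absurd h hx
    have hset : {r : ℝ | ∃ f : V → ℝ, f ≠ 0 ∧ M.mulVec f = r • f} = {0} :=
      Set.eq_singleton_iff_nonempty_unique_mem.mpr ⟨hSne, hall⟩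
    rw [ht1, hset, csInf_singleton]
    norm_num
  · rw [ht1, ge_iff_le]
    have hdR : (0:ℝ) < (d:ℝ) := by exact_mod_cast hd
    have hkey : ∀ b ∈ {r : ℝ | ∃ f : V → ℝ, f ≠ 0 ∧ M.mulVec f = r • f},
        betaOut Adj ^ 2 / (16*(d:ℝ)) - 1 ≤ b := by
      rintro b ⟨f, hf, hb⟩
      have heig : ∀ x, ∑ y, (if Adj x y then (1:ℝ) else 0) * f y = (d:ℝ) * b * f x := by
        intro x
        have h1 := congrFun hb x
        rw [hM, Matrix.smul_mulVec] at h1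
        simp only [Pi.smul_apply, smul_eq_mul] at h1
        have h2 : (Matrix.of fun x y : V => if Adj x y then (1:ℝ) else 0).mulVec f x
            = ∑ y, (if Adj x y then (1:ℝ) else 0) * f y := by
          simp [Matrix.mulVec, dotProduct]
        rw [h2] at h1
        have hdne : ((d:ℝ)) ≠ 0 := ne_of_gt hdR
        calc ∑ y, (if Adj x y then (1:ℝ) else 0) * f y
            = (d:ℝ) * ((d:ℝ)⁻¹ * ∑ y, (if Adj x y then (1:ℝ) else 0) * f y) := by
              field_simp
          _ = (d:ℝ) * (b * f x) := by rw [h1]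
          _ = (d:ℝ) * b * f x := by ring
      have hk := key_estimate Adj hsymm d hd hreg b f hf heig
      have h16 : (0:ℝ) < 16*(d:ℝ) := by linarith
      have : betaOut Adj ^ 2 / (16*(d:ℝ)) ≤ 1 + b := by
        rw [div_le_iff₀ h16]
        nlinarith
      linarith
    have h := le_csInf hSne hkey
    linarith
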